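/- Let D = ∂/∂X + Σ_{i=1}^n (a_i(X)·Y_i + b_i(X))·∂/∂Y_i be a Shamsuddin derivation of K[X, Y_1,…,Y_n] with a_i(X), b_i(X) ∈ K[X], n ≥ 1. If D is simple, then Tame_D(K[X, Y_1,…,Y_n]) = {id}; i.e., the only elementary automorphism of K[X, Y_1,…,Y_n] commuting with D is the identity. -/

import Mathlib

open MvPolynomial

/-- An elementary automorphism of `K[X_1,…,X_n]`: there are an index `i`, a nonzero scalar `a`
and a polynomial `f` not involving `X i` such that `ρ (X i) = a • X i + f` and `ρ` fixes the
other variables. -/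
def IsElementary {K : Type*} [CommSemiring K] {n : ℕ}
    (ρ : MvPolynomial (Fin n) K ≃ₐ[K] MvPolynomial (Fin n) K) : Prop :=
  ∃ (i : Fin n) (a : K) (f : MvPolynomial (Fin n) K), a ≠ 0 ∧
    MvPolynomial.degreeOf i f = 0 ∧
    ρ (X i) = C a * X i + f ∧ ∀ j : Fin n, j ≠ i → ρ (X j) = X j

/-- `ρ` commutes with the derivation `D`, i.e. `ρ ∘ D = D ∘ ρ`. -/
def CommutesWith {K A : Type*} [CommRing K] [CommRing A] [Algebra K A]
    (ρ : A ≃ₐ[K] A) (D : Derivation K A A) : Prop :=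
  ∀ p : A, ρ (D p) = D (ρ p)

/-- The tame isotropy group of `D`: the subgroup of the automorphism group generated by the
elementary automorphisms commuting with `D`. -/
noncomputable def tameIsotropy {K : Type*} [CommRing K] {n : ℕ}
    (D : Derivation K (MvPolynomial (Fin n) K) (MvPolynomial (Fin n) K)) :
    Subgroup (MvPolynomial (Fin n) K ≃ₐ[K] MvPolynomial (Fin n) K) :=
  Subgroup.closure {ρ | IsElementary ρ ∧ CommutesWith ρ D}

/-- A derivation is simple if the only `D`-stable ideals are `⊥` and `⊤`. -/
def IsSimpleDerivation {K A : Type*} [CommRing K] [CommRing A] [Algebra K A]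
    (D : Derivation K A A) : Prop :=
  ∀ I : Ideal A, (∀ x ∈ I, D x ∈ I) → I = ⊥ ∨ I = ⊤

/-- A translation of `K[X_1,…,X_n]`: each variable `X j` is sent to `X j + c j`. -/
def IsTranslation {K : Type*} [CommSemiring K] {n : ℕ}
    (ρ : MvPolynomial (Fin n) K ≃ₐ[K] MvPolynomial (Fin n) K) : Prop :=
  ∃ c : Fin n → K, ∀ j : Fin n, ρ (X j) = X j + C (c j)

section Aux
variable {K : Type*} [Field K]

theorem dsum_apply' {R A : Type*} [CommRing R] [CommRing A] [Algebra R A]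
    {ι : Type*} [DecidableEq ι] (s : Finset ι) (d : ι → Derivation R A A) (p : A) :
    (∑ i ∈ s, d i) p = ∑ i ∈ s, d i p := by
  induction s using Finset.induction with
  | empty => simp
  | insert _ _ h ih => simp [Finset.sum_insert h, ih]

/-- Units of a multivariate polynomial ring over a field are constants. -/
theorem mv_isUnit_eq_C : ∀ (m : ℕ) (w : MvPolynomial (Fin m) K), IsUnit w → ∃ c : K, w = C c := by
  intro m
  induction m with
  | zero =>
    intro w _
    refine ⟨isEmptyAlgEquiv K (Fin 0) w, ?_⟩
    have := (isEmptyAlgEquiv K (Fin 0)).symm.commutes (isEmptyAlgEquiv K (Fin 0) w)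
    simpa [MvPolynomial.algebraMap_eq] using ((isEmptyAlgEquiv K (Fin 0)).symm_apply_apply w).symm.trans this
  | succ m ih =>
    intro w hw
    set e := MvPolynomial.finSuccEquiv K m with he
    have hu : IsUnit (e w) := hw.map e
    obtain ⟨r, hr, hCr⟩ := Polynomial.isUnit_iff.mp hu
    obtain ⟨c, hc⟩ := ih r hr
    refine ⟨c, ?_⟩
    have h1 : e w = algebraMap K _ c := by
      rw [← hCr, hc]
      simp [Polynomial.algebraMap_apply, MvPolynomial.algebraMap_eq]
    have := congrArg e.symm h1
    rwa [e.symm_apply_apply, AlgEquiv.commutes, MvPolynomial.algebraMap_eq] at this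

theorem not_isUnit_X_sub {m : ℕ} (i : Fin m) (g : MvPolynomial (Fin m) K)
    (hg : degreeOf i g = 0) : ¬ IsUnit (X i - g) := by
  intro h
  obtain ⟨c, hc⟩ := mv_isUnit_eq_C m _ h
  have hXi : (X i : MvPolynomial (Fin m) K) = g + C c := by linear_combination hc
  have h1 : degreeOf i (X i : MvPolynomial (Fin m) K) ≤ 0 := by
    rw [hXi]
    refine le_trans (degreeOf_add_le _ _ _) ?_
    simp [hg, degreeOf_C]
  rw [degreeOf_X] at h1
  simp at h1

theorem X_sub_ne_zero {m : ℕ} (i : Fin m) (g : MvPolynomial (Fin m) K)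
    (hg : degreeOf i g = 0) : (X i : MvPolynomial (Fin m) K) - g ≠ 0 := by
  intro h
  have hXi : (X i : MvPolynomial (Fin m) K) = g := by linear_combination h
  have h1 : degreeOf i (X i : MvPolynomial (Fin m) K) = 0 := by rw [hXi]; exact hg
  rw [degreeOf_X] at h1
  simp at h1

theorem darboux {A : Type*} [CommRing A] [Algebra K A] (D : Derivation K A A)
    (h : IsSimpleDerivation D) {w u : A} (hw : D w = u * w) : w = 0 ∨ IsUnit w := by
  have hst : ∀ x ∈ Ideal.span {w}, D x ∈ Ideal.span {w} := by
    intro x hx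
    obtain ⟨g, hg⟩ := Ideal.mem_span_singleton'.mp hx
    rw [← hg, D.leibniz, hw, smul_eq_mul, smul_eq_mul]
    exact Ideal.mem_span_singleton'.mpr ⟨g * u + D g, by ring⟩
  rcases h _ hst with h1 | h1
  · exact Or.inl (Ideal.span_singleton_eq_bot.mp h1)
  · exact Or.inr (Ideal.span_singleton_eq_top.mp h1)

theorem poly_const_of_comp [CharZero K] {p : Polynomial K} {c : K} (hc : c ≠ 0)
    (h : p.comp (Polynomial.X + Polynomial.C c) = p) : ∃ l : K, p = Polynomial.C l := by
  have heval : ∀ x : K, p.eval (x + c) = p.eval x := by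
    intro x
    conv_rhs => rw [← h]
    rw [Polynomial.eval_comp]
    simp
  have hk : ∀ k : ℕ, p.eval ((k : K) * c) = p.eval 0 := by
    intro k
    induction k with
    | zero => simp
    | succ k ih =>
      have h2 : ((k : K) + 1) * c = (k : K) * c + c := by ring
      rw [Nat.cast_succ, h2, heval, ih]
  set q := p - Polynomial.C (p.eval 0) with hq
  have hq0 : q = 0 := by
    apply Polynomial.eq_zero_of_infinite_isRoot
    apply Set.Infinite.mono (s := Set.range (fun k : ℕ => (k : K) * c))
    · rintro x ⟨k, rfl⟩
      simp [Polynomial.IsRoot, hq, hk k]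
    · apply Set.infinite_range_of_injective
      intro k l hkl
      have : (k : K) = l := mul_right_cancel₀ hc hkl
      exact_mod_cast this
  exact ⟨p.eval 0, by linear_combination hq0⟩

theorem sep_lemma {m : ℕ} {s : Fin m} {A1 B1 A2 B2 : MvPolynomial (Fin m) K}
    (h1 : pderiv s A1 = 0) (h2 : pderiv s B1 = 0) (h3 : pderiv s A2 = 0) (h4 : pderiv s B2 = 0)
    (h : A1 * X s + B1 = A2 * X s + B2) : A1 = A2 ∧ B1 = B2 := by
  have hA : A1 = A2 := by
    have h5 := congrArg (pderiv s) h
    simpa [(pderiv s).leibniz, pderiv_X_self, h1, h2, h3, h4, smul_eq_mul] using h5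
  rw [hA] at h
  exact ⟨hA, add_left_cancel h⟩

theorem aeval_X0_inj {m : ℕ} {p q : Polynomial K}
    (h : Polynomial.aeval (X 0 : MvPolynomial (Fin (m+1)) K) p
       = Polynomial.aeval (X 0 : MvPolynomial (Fin (m+1)) K) q) : p = q := by
  set F : MvPolynomial (Fin (m+1)) K →ₐ[K] Polynomial K :=
    MvPolynomial.aeval (fun j => if j = 0 then Polynomial.X else 0) with hF
  have key : ∀ r : Polynomial K, F (Polynomial.aeval (X 0 : MvPolynomial (Fin (m+1)) K) r) = r := by
    intro r
    rw [← Polynomial.aeval_algHom_apply]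
    simp [hF]
  have := congrArg F h
  rwa [key, key] at this

theorem degreeOf_aeval_X0 {m : ℕ} (s : Fin (m+1)) (hs : s ≠ 0) (p : Polynomial K) :
    degreeOf s (Polynomial.aeval (X 0 : MvPolynomial (Fin (m+1)) K) p) = 0 := by
  refine Nat.le_zero.mp ?_
  induction p using Polynomial.induction_on' with
  | add p q hp hq =>
    rw [map_add]
    exact le_trans (degreeOf_add_le _ _ _) (by simp [Nat.le_zero.mp hp, Nat.le_zero.mp hq])
  | monomial n c =>
    rw [Polynomial.aeval_monomial, MvPolynomial.algebraMap_eq]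
    refine le_trans (degreeOf_mul_le _ _ _) ?_
    have h1 : degreeOf s ((X 0 : MvPolynomial (Fin (m+1)) K) ^ n) ≤ 0 := by
      refine le_trans (degreeOf_pow_le _ _ _) ?_
      rw [degreeOf_X]
      simp [hs]
    simp [degreeOf_C]
    omega

theorem exists_antideriv [CharZero K] (q : Polynomial K) :
    ∃ P : Polynomial K, Polynomial.derivative P = q := by
  refine ⟨q.sum fun n c => Polynomial.C (c / (n+1)) * Polynomial.X ^ (n+1), ?_⟩
  rw [Polynomial.sum_def, map_sum]
  have : ∀ n ∈ q.support, Polynomial.derivative (Polynomial.C (q.coeff n / (↑n+1)) * Polynomial.X ^ (n+1))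
      = Polynomial.C (q.coeff n) * Polynomial.X ^ n := by
    intro n _
    have hn : ((n : K) + 1) ≠ 0 := by
      have h2 : ((n : K) + 1) = ((n+1 : ℕ) : K) := by push_cast; ring
      rw [h2]
      exact_mod_cast Nat.succ_ne_zero n
    rw [Polynomial.derivative_C_mul_X_pow, Nat.add_sub_cancel]
    congr 1
    rw [Nat.cast_add, Nat.cast_one, div_mul_cancel₀ _ hn]
  rw [Finset.sum_congr rfl this]
  exact (Polynomial.sum_def q _).symm.trans (Polynomial.sum_C_mul_X_pow_eq q)

theorem algEquiv_one {m : ℕ}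
    (ρ : MvPolynomial (Fin m) K ≃ₐ[K] MvPolynomial (Fin m) K) (h : ∀ t, ρ (X t) = X t) : ρ = 1 := by
  have h2 : (ρ : MvPolynomial (Fin m) K →ₐ[K] MvPolynomial (Fin m) K) = AlgHom.id K _ :=
    MvPolynomial.algHom_ext (fun i => by simp [h i])
  refine AlgEquiv.ext fun p => ?_
  have h3 := DFunLike.congr_fun h2 p
  simpa using h3

end Aux


/-- If the Shamsuddin derivation `D = ∂/∂X + Σ (a_i(X)·Y_i + b_i(X))·∂/∂Y_i` of
`K[X,Y_1,…,Y_n]`, `n ≥ 1`, is simple, then `Tame_D = {id}`: the only elementary automorphism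
commuting with `D` is the identity. -/
theorem stmt_16 {K : Type*} [Field K] [CharZero K] [IsAlgClosed K]
    (n : ℕ) (hn : 1 ≤ n) (a b : Fin n → Polynomial K)
    (D : Derivation K (MvPolynomial (Fin (n + 1)) K) (MvPolynomial (Fin (n + 1)) K))
    (hD : D = pderiv (0 : Fin (n + 1)) + ∑ i : Fin n,
      (Polynomial.aeval (X 0 : MvPolynomial (Fin (n + 1)) K) (a i) * X i.succ
        + Polynomial.aeval (X 0 : MvPolynomial (Fin (n + 1)) K) (b i)) • pderiv i.succ)
    (hsimple : IsSimpleDerivation D) :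
    tameIsotropy D = ⊥ ∧
    ∀ ρ : MvPolynomial (Fin (n + 1)) K ≃ₐ[K] MvPolynomial (Fin (n + 1)) K,
      IsElementary ρ → CommutesWith ρ D → ρ = 1 := by
  classical
  have hpd : ∀ s t : Fin (n+1), s ≠ t → pderiv s (X t : MvPolynomial (Fin (n+1)) K) = 0 := by
    intro s t h
    rw [pderiv_X]
    exact Pi.single_eq_of_ne (Ne.symm h) 1
  have hDX0 : D (X 0 : MvPolynomial (Fin (n+1)) K) = 1 := by
    rw [hD, Derivation.add_apply, dsum_apply', pderiv_X_self, add_eq_left]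
    exact Finset.sum_eq_zero fun i _ => by
      rw [Derivation.smul_apply, hpd _ _ (Fin.succ_ne_zero i), smul_zero]
  have hDXs : ∀ j : Fin n, D (X j.succ : MvPolynomial (Fin (n+1)) K)
      = Polynomial.aeval (X 0 : MvPolynomial (Fin (n+1)) K) (a j) * X j.succ
        + Polynomial.aeval (X 0 : MvPolynomial (Fin (n+1)) K) (b j) := by
    intro j
    rw [hD, Derivation.add_apply, dsum_apply', hpd 0 j.succ (Ne.symm (Fin.succ_ne_zero j)), zero_add]
    simp only [Derivation.smul_apply, pderiv_X, Pi.single_apply, Fin.succ_inj, smul_eq_mul,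
      mul_ite, mul_one, mul_zero]
    rw [Finset.sum_ite_eq]
    simp
  have hDC : ∀ c : K, D (C c : MvPolynomial (Fin (n+1)) K) = 0 := fun c => by
    rw [← MvPolynomial.algebraMap_eq]; exact D.map_algebraMap c
  have hDCmul : ∀ (c : K) (y : MvPolynomial (Fin (n+1)) K), D (C c * y) = C c * D y := fun c y => by
    rw [D.leibniz, hDC, smul_zero, add_zero, smul_eq_mul]
  have hpdaeval : ∀ (s : Fin (n+1)) (y : MvPolynomial (Fin (n+1)) K) (p : Polynomial K),
      pderiv s y = 0 → pderiv s (Polynomial.aeval y p) = 0 := fun s y p h => by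
    rw [Derivation.map_aeval, h, smul_zero]
  have haK : ∀ k : Fin n, a k ≠ 0 := by
    intro k hak
    obtain ⟨P, hP⟩ := exists_antideriv (b k)
    have hdg : degreeOf k.succ (Polynomial.aeval (X 0 : MvPolynomial (Fin (n+1)) K) P) = 0 :=
      degreeOf_aeval_X0 _ (Fin.succ_ne_zero k) _
    have hDw : D (X k.succ - Polynomial.aeval (X 0 : MvPolynomial (Fin (n+1)) K) P)
        = 0 * (X k.succ - Polynomial.aeval (X 0 : MvPolynomial (Fin (n+1)) K) P) := by
      rw [map_sub, hDXs k, Derivation.map_aeval, hP, hDX0, smul_eq_mul, mul_one, hak, map_zero]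
      ring
    rcases darboux D hsimple hDw with h | h
    · exact X_sub_ne_zero _ _ hdg h
    · exact not_isUnit_X_sub _ _ hdg h
  have key : ∀ ρ : MvPolynomial (Fin (n + 1)) K ≃ₐ[K] MvPolynomial (Fin (n + 1)) K,
      IsElementary ρ → CommutesWith ρ D → ρ = 1 := by
    rintro ρ ⟨i, α, f, hα, hdeg, hXi, hfix⟩ hcomm
    have hρa : ∀ p : Polynomial K,
        ρ (Polynomial.aeval (X 0 : MvPolynomial (Fin (n+1)) K) p) = Polynomial.aeval (ρ (X 0)) p :=
      fun p => (Polynomial.aeval_algHom_apply ρ (X 0) p).symm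
    rcases Fin.eq_zero_or_eq_succ i with hi | ⟨k, hk⟩
    · -- i = 0
      subst hi
      have heq := hcomm (X 0)
      rw [hDX0, map_one, hXi, map_add, hDCmul, hDX0, mul_one] at heq
      -- heq : 1 = C α + D f
      by_cases hα1 : α = 1
      · subst hα1
        have hf : D f = 0 * f := by
          rw [zero_mul]
          have hC1 : (C (1:K) : MvPolynomial (Fin (n+1)) K) = 1 := map_one C
          linear_combination -heq - hC1
        rcases darboux D hsimple hf with hf0 | hfu
        · apply algEquiv_one
          intro t
          by_cases ht : t = 0
          · subst ht; rw [hXi, hf0, map_one, one_mul, add_zero]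
          · exact hfix t ht
        · exfalso
          obtain ⟨c, hc⟩ := mv_isUnit_eq_C _ f hfu
          have hc0 : c ≠ 0 := by
            rintro rfl
            rw [map_zero] at hc
            rw [hc] at hfu
            exact not_isUnit_zero hfu
          subst hc
          have hρ0 : ρ (X 0) = X 0 + C c := by rw [hXi, map_one, one_mul]
          set j : Fin n := ⟨0, hn⟩ with hj
          have hsj : ρ (X j.succ) = X j.succ := hfix _ (Fin.succ_ne_zero j)
          have heq2 := hcomm (X j.succ)
          rw [hDXs j, map_add, map_mul, hρa, hρa, hρ0, hsj, hDXs j] at heq2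
          have hy : pderiv j.succ ((X 0 : MvPolynomial (Fin (n+1)) K) + C c) = 0 := by
            rw [map_add, hpd _ _ (Fin.succ_ne_zero j), pderiv_C, add_zero]
          obtain ⟨hA, hB⟩ := sep_lemma (hpdaeval _ _ _ hy) (hpdaeval _ _ _ hy)
            (hpdaeval _ _ _ (hpd _ _ (Fin.succ_ne_zero j)))
            (hpdaeval _ _ _ (hpd _ _ (Fin.succ_ne_zero j))) heq2
          have hcomp : ∀ p : Polynomial K,
              Polynomial.aeval ((X 0 : MvPolynomial (Fin (n+1)) K) + C c) p
              = Polynomial.aeval (X 0 : MvPolynomial (Fin (n+1)) K)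
                  (p.comp (Polynomial.X + Polynomial.C c)) := by
            intro p
            rw [Polynomial.aeval_comp]
            congr 1
            rw [map_add, Polynomial.aeval_X, Polynomial.aeval_C, MvPolynomial.algebraMap_eq]
          have ha' : (a j).comp (Polynomial.X + Polynomial.C c) = a j :=
            aeval_X0_inj (by rw [← hcomp, hA])
          have hb' : (b j).comp (Polynomial.X + Polynomial.C c) = b j :=
            aeval_X0_inj (by rw [← hcomp, hB])
          obtain ⟨lam, hlam⟩ := poly_const_of_comp hc0 ha'
          obtain ⟨mu, hmu⟩ := poly_const_of_comp hc0 hb'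
          have hlam0 : lam ≠ 0 := by
            rintro rfl
            rw [map_zero] at hlam
            exact haK j hlam
          have hdegg : degreeOf j.succ (C (-(mu/lam)) : MvPolynomial (Fin (n+1)) K) = 0 :=
            degreeOf_C _ _
          have hDw : D (X j.succ - C (-(mu/lam)))
              = C lam * (X j.succ - C (-(mu/lam))) := by
            rw [map_sub, hDXs j, hDC, sub_zero, hlam, hmu, Polynomial.aeval_C, Polynomial.aeval_C,
              MvPolynomial.algebraMap_eq]
            have hmul : (C lam : MvPolynomial (Fin (n+1)) K) * C (-(mu/lam)) = - C mu := by
              rw [← map_mul, ← map_neg]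
              congr 1
              field_simp
            linear_combination hmul
          rcases darboux D hsimple hDw with h | h
          · exact X_sub_ne_zero _ _ hdegg h
          · exact not_isUnit_X_sub _ _ hdegg h
      · exfalso
        have h1α : (1 - α) ≠ 0 := sub_ne_zero.mpr (Ne.symm hα1)
        have hDg : D (C ((1-α)⁻¹) * f) = 1 := by
          rw [hDCmul]
          have hC1 : (C (1-α) : MvPolynomial (Fin (n+1)) K) = 1 - C α := by rw [map_sub, map_one]
          have hCC : (C ((1-α)⁻¹) : MvPolynomial (Fin (n+1)) K) * C (1-α) = 1 := by
            rw [← map_mul, inv_mul_cancel₀ h1α, map_one]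
          linear_combination hCC - (C ((1-α)⁻¹) : MvPolynomial (Fin (n+1)) K) * heq
            - (C ((1-α)⁻¹) : MvPolynomial (Fin (n+1)) K) * hC1
        have hdegg : degreeOf 0 (C ((1-α)⁻¹) * f : MvPolynomial (Fin (n+1)) K) = 0 := by
          refine Nat.le_zero.mp (le_trans (degreeOf_mul_le _ _ _) ?_)
          simp [degreeOf_C, hdeg]
        have hDw : D (X 0 - C ((1-α)⁻¹) * f) = 0 * (X 0 - C ((1-α)⁻¹) * f) := by
          rw [map_sub, hDX0, hDg, sub_self, zero_mul]
        rcases darboux D hsimple hDw with h | h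
        · exact X_sub_ne_zero _ _ hdegg h
        · exact not_isUnit_X_sub _ _ hdegg h
    · -- i = k.succ
      subst hk
      have h0 : ρ (X 0) = X 0 := hfix 0 (Ne.symm (Fin.succ_ne_zero k))
      have heq := hcomm (X k.succ)
      rw [hDXs k, map_add, map_mul, hρa, hρa, h0, hXi, map_add, hDCmul, hDXs k] at heq
      have hC1 : (C (1-α) : MvPolynomial (Fin (n+1)) K) = 1 - C α := by rw [map_sub, map_one]
      have hf : D f = Polynomial.aeval (X 0 : MvPolynomial (Fin (n+1)) K) (a k) * f
          + C (1-α) * Polynomial.aeval (X 0 : MvPolynomial (Fin (n+1)) K) (b k) := by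
        rw [hC1]
        linear_combination -heq
      by_cases hα1 : α = 1
      · subst hα1
        rw [sub_self, map_zero, zero_mul, add_zero] at hf
        rcases darboux D hsimple hf with hf0 | hfu
        · apply algEquiv_one
          intro t
          by_cases ht : t = k.succ
          · subst ht; rw [hXi, hf0, map_one, one_mul, add_zero]
          · exact hfix t ht
        · exfalso
          obtain ⟨c, hc⟩ := mv_isUnit_eq_C _ f hfu
          have hc0 : c ≠ 0 := by
            rintro rfl
            rw [map_zero] at hc
            rw [hc] at hfu
            exact not_isUnit_zero hfu
          rw [hc, hDC] at hf
          have h2 : Polynomial.aeval (X 0 : MvPolynomial (Fin (n+1)) K) (a k) = 0 := by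
            rcases mul_eq_zero.mp hf.symm with h | h
            · exact h
            · exact absurd (by simpa using h) hc0
          have h3 : a k = 0 := aeval_X0_inj (by rw [h2, map_zero])
          exact absurd h3 (haK k)
      · exfalso
        have h1α : (1 - α) ≠ 0 := sub_ne_zero.mpr (Ne.symm hα1)
        have hDg : D (C ((1-α)⁻¹) * f)
            = Polynomial.aeval (X 0 : MvPolynomial (Fin (n+1)) K) (a k) * (C ((1-α)⁻¹) * f)
              + Polynomial.aeval (X 0 : MvPolynomial (Fin (n+1)) K) (b k) := by
          rw [hDCmul, hf]
          have hCC : (C ((1-α)⁻¹) : MvPolynomial (Fin (n+1)) K) * C (1-α) = 1 := by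
            rw [← map_mul, inv_mul_cancel₀ h1α, map_one]
          linear_combination (Polynomial.aeval (X 0 : MvPolynomial (Fin (n+1)) K) (b k)) * hCC
        have hdegg : degreeOf k.succ (C ((1-α)⁻¹) * f : MvPolynomial (Fin (n+1)) K) = 0 := by
          refine Nat.le_zero.mp (le_trans (degreeOf_mul_le _ _ _) ?_)
          simp [degreeOf_C, hdeg]
        have hDw : D (X k.succ - C ((1-α)⁻¹) * f)
            = Polynomial.aeval (X 0 : MvPolynomial (Fin (n+1)) K) (a k)
              * (X k.succ - C ((1-α)⁻¹) * f) := by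
          rw [map_sub, hDXs k, hDg]
          ring
        rcases darboux D hsimple hDw with h | h
        · exact X_sub_ne_zero _ _ hdegg h
        · exact not_isUnit_X_sub _ _ hdegg h
  refine ⟨?_, key⟩
  rw [tameIsotropy, Subgroup.closure_eq_bot_iff]
  rintro ρ ⟨h1, h2⟩
  exact key ρ h1 h2
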